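/- arXiv:1301.2171 — 2 statements merged into one kernel-verified Lean document; each statement's English description precedes it below -/
import Mathlib

section
/- Let Ω be a countably infinite set and let u, f ∈ Ω^Ω. If 0 < d(u) < ∞, 0 < d(f) < ∞, c(u) = c(f), and k(f) < ∞, then f belongs to the subsemigroup of Ω^Ω generated by S_{1,2,3,4,5} ∪ {u}. -/
/-!
Setting: `Ω` is a countably infinite set, `Function.End Ω = Ω → Ω` is the full
transformation semigroup (a subset is closed under composition in one order iff
it is closed in the other, so the lattice of subsemigroups is unaffected by the
left-to-right convention of the paper).
-/

open Cardinal

/-- A transversal of `f`: a set on which `f` is injective and whose image is all of `Ωf`. -/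
def IsTransversal {Ω : Type*} (f : Ω → Ω) (T : Set Ω) : Prop :=
  Set.InjOn f T ∧ f '' T = Set.range f

/-- The defect `d(f) = |Ω \ Ωf|`. -/
noncomputable def defect {Ω : Type*} (f : Ω → Ω) : Cardinal :=
  #((Set.range f)ᶜ : Set Ω)

/-- The collapse `c(f) = |Ω \ Σ|` for a transversal `Σ` of `f` (the value is
independent of the choice of transversal, so the infimum is the common value). -/
noncomputable def collapse {Ω : Type*} (f : Ω → Ω) : Cardinal :=
  ⨅ T : {T : Set Ω // IsTransversal f T}, #(T.1ᶜ : Set Ω)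

/-- The infinite contraction index `k(f) = |{α : αf⁻¹ infinite}|`. -/
noncomputable def contract {Ω : Type*} (f : Ω → Ω) : Cardinal :=
  #({α : Ω | (f ⁻¹' {α}).Infinite} : Set Ω)

def S1 {Ω : Type*} : Set (Function.End Ω) := {f | collapse f = 0 ∨ 0 < defect f}
def S2 {Ω : Type*} : Set (Function.End Ω) := {f | 0 < collapse f ∨ defect f = 0}
def S3 {Ω : Type*} : Set (Function.End Ω) := {f | collapse f < ℵ₀ ∨ ℵ₀ ≤ defect f}
def S4 {Ω : Type*} : Set (Function.End Ω) := {f | ℵ₀ ≤ collapse f ∨ defect f < ℵ₀}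
def S5 {Ω : Type*} : Set (Function.End Ω) := {f | contract f < ℵ₀}

/-- `Sym(Ω)`, the bijections of `Ω`. -/
def SymOmega {Ω : Type*} : Set (Function.End Ω) := {f | Function.Bijective f}

/-- `U = {f : d(f) = ∞ or 0 < c(f) < ∞} ∪ Sym(Ω)`. -/
def SetU {Ω : Type*} : Set (Function.End Ω) :=
  {f | ℵ₀ ≤ defect f ∨ (0 < collapse f ∧ collapse f < ℵ₀)} ∪ SymOmega

/-- `V = {f : c(f) = ∞ or 0 < d(f) < ∞} ∪ Sym(Ω)`. -/
def SetV {Ω : Type*} : Set (Function.End Ω) :=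
  {f | ℵ₀ ≤ collapse f ∨ (0 < defect f ∧ defect f < ℵ₀)} ∪ SymOmega

/-- `S_{1,2,3,4,5}`. -/
def S12345 {Ω : Type*} : Set (Function.End Ω) := S1 ∩ S2 ∩ S3 ∩ S4 ∩ S5

/-- The family `S_1, …, S_5` indexed by `Fin 5`. -/
def SS {Ω : Type*} : Fin 5 → Set (Function.End Ω) := ![S1, S2, S3, S4, S5]

lemma exists_transversal {Ω : Type*} (g : Ω → Ω) : ∃ T, IsTransversal g T := by
  classical
  have h : ∀ α : Set.range g, ∃ x, g x = α := fun α => α.2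
  choose p hp using h
  refine ⟨Set.range p, ?_, ?_⟩
  · rintro _ ⟨α, rfl⟩ _ ⟨β, rfl⟩ hgg
    rw [hp, hp] at hgg
    rw [Subtype.ext hgg]
  · ext y
    constructor
    · rintro ⟨_, ⟨α, rfl⟩, rfl⟩
      rw [hp]; exact α.2
    · intro hy
      exact ⟨p ⟨y, hy⟩, ⟨_, rfl⟩, hp _⟩

lemma transversal_compl_le {Ω : Type*} {g : Ω → Ω} {T T' : Set Ω}
    (hT : IsTransversal g T) (hT' : IsTransversal g T') :
    #(Tᶜ : Set Ω) ≤ #(T'ᶜ : Set Ω) := by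
  classical
  have hrep : ∀ x : Ω, ∃ t, t ∈ T ∧ g t = g x := by
    intro x
    have hx : g x ∈ g '' T := hT.2.symm ▸ Set.mem_range_self x
    obtain ⟨t, ht, hgt⟩ := hx
    exact ⟨t, ht, hgt⟩
  choose r hrT hrg using hrep
  have key : ∀ x : Ω, x ∉ T → (if x ∈ T' then r x else x) ∉ T' := by
    intro x hx
    by_cases hx' : x ∈ T'
    · simp only [hx', if_true]
      intro hr
      have heq : r x = x := hT'.1 hr hx' (hrg x)
      exact hx (heq ▸ hrT x)
    · simp only [if_neg hx']
      exact hx'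
  have hinj : Function.Injective (fun x : (Tᶜ : Set Ω) =>
      (⟨if (x : Ω) ∈ T' then r x else x, key x x.2⟩ : (T'ᶜ : Set Ω))) := by
    rintro ⟨x, hx⟩ ⟨y, hy⟩ hxy
    simp only [Subtype.mk.injEq] at hxy ⊢
    by_cases hx' : x ∈ T' <;> by_cases hy' : y ∈ T' <;>
      simp only [hx', hy', if_true, if_false] at hxy
    · have hgg : g x = g y := by rw [← hrg x, ← hrg y, hxy]
      exact hT'.1 hx' hy' hgg
    · exact absurd (hxy ▸ hrT x) hy
    · exact absurd (hxy.symm ▸ hrT y) hx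
    · exact hxy
  exact Cardinal.mk_le_of_injective hinj

lemma collapse_eq' {Ω : Type*} {g : Ω → Ω} {T : Set Ω} (hT : IsTransversal g T) :
    collapse g = #(Tᶜ : Set Ω) := by
  have hne : Nonempty {T : Set Ω // IsTransversal g T} := ⟨⟨T, hT⟩⟩
  apply le_antisymm
  · exact ciInf_le' _ (⟨T, hT⟩ : {T : Set Ω // IsTransversal g T})
  · exact le_ciInf fun T' => transversal_compl_le hT T'.2

lemma compl_finite_of_defect {Ω : Type*} {g : Ω → Ω} (h : defect g < ℵ₀) :
    ((Set.range g)ᶜ : Set Ω).Finite :=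
  Cardinal.lt_aleph0_iff_set_finite.mp h

lemma range_infinite {Ω : Type*} [Infinite Ω] {g : Ω → Ω} (h : defect g < ℵ₀) :
    (Set.range g).Infinite := by
  intro hfin
  have hu := hfin.union (compl_finite_of_defect h)
  rw [Set.union_compl_self] at hu
  exact Set.infinite_univ hu

theorem stmt7 (Ω : Type) [Countable Ω] [Infinite Ω] (u f : Function.End Ω)
    (hdu : 0 < defect u) (hdu' : defect u < ℵ₀)
    (hdf : 0 < defect f) (hdf' : defect f < ℵ₀)
    (hc : collapse u = collapse f) (hkf : contract f < ℵ₀) :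
    f ∈ Subsemigroup.closure (S12345 ∪ {u}) := by
  classical
  obtain ⟨T, hT⟩ := exists_transversal u
  have hTinf : T.Infinite := by
    intro hfin
    have hru : (Set.range u).Finite := hT.2 ▸ hfin.image u
    exact range_infinite hdu' hru
  have hRfinf : (Set.range f).Infinite := range_infinite hdf'
  have hcard : #(Set.range f : Set Ω) = #(T : Set Ω) := by
    have i1 : Infinite (Set.range f : Set Ω) := Set.infinite_coe_iff.mpr hRfinf
    have i2 : Infinite (T : Set Ω) := Set.infinite_coe_iff.mpr hTinf
    have h1 : #(Set.range f : Set Ω) = ℵ₀ :=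
      le_antisymm Cardinal.mk_le_aleph0 (Cardinal.aleph0_le_mk _)
    have h2 : #(T : Set Ω) = ℵ₀ :=
      le_antisymm Cardinal.mk_le_aleph0 (Cardinal.aleph0_le_mk _)
    rw [h1, h2]
  obtain ⟨e⟩ := Cardinal.eq.mp hcard
  set b : Function.End Ω := fun x => (e ⟨f x, Set.mem_range_self x⟩ : Ω) with hb
  have hrep : ∀ y : Set.range u, ∃ t, t ∈ T ∧ u t = y := by
    intro y
    have hy : (y : Ω) ∈ u '' T := hT.2.symm ▸ y.2
    obtain ⟨t, ht, h⟩ := hy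
    exact ⟨t, ht, h⟩
  choose r hrT hru using hrep
  set a : Function.End Ω := fun y =>
    if h : y ∈ Set.range u then (e.symm ⟨r ⟨y, h⟩, hrT _⟩ : Ω)
    else f (Classical.arbitrary Ω) with ha
  have ha_spec : ∀ y (h : y ∈ Set.range u), a y = (e.symm ⟨r ⟨y, h⟩, hrT _⟩ : Ω) := by
    intro y h
    simp only [ha]
    rw [dif_pos h]
  -- basic facts about b
  have hbinj : ∀ x y : Ω, b x = b y ↔ f x = f y := by
    intro x y
    constructor
    · intro h
      have h2 := e.injective (Subtype.coe_injective h)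
      exact congrArg Subtype.val h2
    · intro h
      simp only [hb]
      have h2 : (⟨f x, Set.mem_range_self x⟩ : Set.range f) = ⟨f y, Set.mem_range_self y⟩ :=
        Subtype.ext h
      rw [h2]
  have hrb : Set.range b = T := by
    ext t
    constructor
    · rintro ⟨x, rfl⟩
      exact (e _).2
    · intro ht
      obtain ⟨x, hx⟩ := (e.symm ⟨t, ht⟩).2
      refine ⟨x, ?_⟩
      show (e ⟨f x, Set.mem_range_self x⟩ : Ω) = t
      have h2 : (⟨f x, Set.mem_range_self x⟩ : Set.range f) = e.symm ⟨t, ht⟩ := Subtype.ext hx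
      rw [h2, Equiv.apply_symm_apply]
  have htrans : ∀ S : Set Ω, IsTransversal b S ↔ IsTransversal f S := by
    intro S
    constructor
    · rintro ⟨h1, h2⟩
      constructor
      · intro x hx y hy hxy
        exact h1 hx hy ((hbinj x y).mpr hxy)
      · apply Set.Subset.antisymm (Set.image_subset_range _ _)
        rintro _ ⟨x0, rfl⟩
        have h3 : (e ⟨f x0, Set.mem_range_self x0⟩ : Ω) ∈ b '' S := by
          rw [h2, hrb]; exact (e _).2
        obtain ⟨x, hxS, hx⟩ := h3
        have h4 : f x = f x0 := by
          have h5 : b x = b x0 := hx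
          exact (hbinj x x0).mp h5
        exact ⟨x, hxS, h4⟩
    · rintro ⟨h1, h2⟩
      constructor
      · intro x hx y hy hxy
        exact h1 hx hy ((hbinj x y).mp hxy)
      · apply Set.Subset.antisymm (Set.image_subset_range _ _)
        rw [hrb]
        intro t ht
        have h3 : (e.symm ⟨t, ht⟩ : Ω) ∈ f '' S := by
          rw [h2]; exact (e.symm _).2
        obtain ⟨x, hxS, hx⟩ := h3
        refine ⟨x, hxS, ?_⟩
        show (e ⟨f x, Set.mem_range_self x⟩ : Ω) = t
        have h4 : (⟨f x, Set.mem_range_self x⟩ : Set.range f) = e.symm ⟨t, ht⟩ := Subtype.ext hx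
        rw [h4, Equiv.apply_symm_apply]
  have hcolb : collapse b = collapse f := by
    unfold collapse
    have h2 : IsTransversal b = IsTransversal f :=
      funext fun S => propext (htrans S)
    rw [h2]
  have hdb : defect b = collapse f := by
    show #((Set.range b)ᶜ : Set Ω) = collapse f
    rw [hrb, ← collapse_eq' hT, hc]
  have hctb : contract b ≤ contract f := by
    have hne : ∀ y : ({α : Ω | (b ⁻¹' {α}).Infinite} : Set Ω), ∃ x, b x = (y : Ω) := by
      intro y
      obtain ⟨x, hx⟩ := y.2.nonempty
      exact ⟨x, hx⟩
    choose w hw using hne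
    have hmem : ∀ y : ({α : Ω | (b ⁻¹' {α}).Infinite} : Set Ω), (f ⁻¹' {f (w y)}).Infinite := by
      intro y
      have hset : f ⁻¹' {f (w y)} = b ⁻¹' {(y : Ω)} := by
        ext x
        show f x = f (w y) ↔ b x = (y : Ω)
        rw [← hbinj, hw]
      rw [hset]
      exact y.2
    have hinj : Function.Injective (fun y : ({α : Ω | (b ⁻¹' {α}).Infinite} : Set Ω) =>
        (⟨f (w y), hmem y⟩ : ({α : Ω | (f ⁻¹' {α}).Infinite} : Set Ω))) := by
      intro y₁ y₂ h
      have h1 : f (w y₁) = f (w y₂) := congrArg Subtype.val h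
      have h2 := (hbinj _ _).mpr h1
      rw [hw, hw] at h2
      exact Subtype.ext h2
    exact Cardinal.mk_le_of_injective hinj
  have hbS : b ∈ (S12345 : Set (Function.End Ω)) := by
    refine ⟨⟨⟨⟨?_, ?_⟩, ?_⟩, ?_⟩, ?_⟩
    · rcases eq_or_ne (collapse f) 0 with h | h
      · exact Or.inl (hcolb.trans h)
      · exact Or.inr (by rw [hdb]; exact pos_iff_ne_zero.mpr h)
    · rcases eq_or_ne (collapse f) 0 with h | h
      · exact Or.inr (hdb.trans h)
      · exact Or.inl (by rw [hcolb]; exact pos_iff_ne_zero.mpr h)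
    · rcases lt_or_ge (collapse f) ℵ₀ with h | h
      · exact Or.inl (by rw [hcolb]; exact h)
      · exact Or.inr (by rw [hdb]; exact h)
    · rcases lt_or_ge (collapse f) ℵ₀ with h | h
      · exact Or.inr (by rw [hdb]; exact h)
      · exact Or.inl (by rw [hcolb]; exact h)
    · exact lt_of_le_of_lt hctb hkf
  -- facts about a
  have hr_eq : ∀ t (ht : t ∈ T), r ⟨u t, Set.mem_range_self t⟩ = t := by
    intro t ht
    exact hT.1 (hrT _) ht (hru _)
  have hfab : ∀ x, a (u (b x)) = f x := by
    intro x
    have hbT : b x ∈ T := (e _).2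
    rw [ha_spec (u (b x)) (Set.mem_range_self (b x))]
    have h1 : (⟨r ⟨u (b x), Set.mem_range_self (b x)⟩, hrT _⟩ : T) =
        e ⟨f x, Set.mem_range_self x⟩ := by
      apply Subtype.ext
      show r ⟨u (b x), Set.mem_range_self (b x)⟩ = (e ⟨f x, Set.mem_range_self x⟩ : Ω)
      rw [hr_eq (b x) hbT]
    rw [h1, Equiv.symm_apply_apply]
  have hra : Set.range a = Set.range f := by
    apply Set.Subset.antisymm
    · rintro _ ⟨y, rfl⟩
      by_cases h : y ∈ Set.range u
      · rw [ha_spec y h]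
        exact (e.symm _).2
      · simp only [ha]
        rw [dif_neg h]
        exact Set.mem_range_self _
    · rintro _ ⟨x, rfl⟩
      exact ⟨u (b x), hfab x⟩
  have hda : defect a = defect f := by
    show #((Set.range a)ᶜ : Set Ω) = #((Set.range f)ᶜ : Set Ω)
    rw [hra]
  have hainj : Set.InjOn a (Set.range u) := by
    intro y₁ h₁ y₂ h₂ hxy
    rw [ha_spec y₁ h₁, ha_spec y₂ h₂] at hxy
    have h3 := e.symm.injective (Subtype.coe_injective hxy)
    have h4 : r ⟨y₁, h₁⟩ = r ⟨y₂, h₂⟩ := congrArg Subtype.val h3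
    have e1 : u (r ⟨y₁, h₁⟩) = y₁ := hru ⟨y₁, h₁⟩
    have e2 : u (r ⟨y₂, h₂⟩) = y₂ := hru ⟨y₂, h₂⟩
    rw [← e1, ← e2, h4]
  have haT : IsTransversal a (Set.range u) := by
    refine ⟨hainj, ?_⟩
    apply Set.Subset.antisymm (Set.image_subset_range _ _)
    rw [hra]
    rintro _ ⟨x, rfl⟩
    exact ⟨u (b x), Set.mem_range_self _, hfab x⟩
  have hcola : collapse a = defect u := collapse_eq' haT
  have hcta : contract a < ℵ₀ := by
    have hfib : ∀ α : Ω, (a ⁻¹' {α}).Finite := by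
      intro α
      have hsub : a ⁻¹' {α} ⊆ (a ⁻¹' {α} ∩ Set.range u) ∪ (Set.range u)ᶜ := by
        intro y hy
        by_cases h : y ∈ Set.range u
        · exact Or.inl ⟨hy, h⟩
        · exact Or.inr h
      have hsing : (a ⁻¹' {α} ∩ Set.range u).Subsingleton := by
        intro y₁ hy₁ y₂ hy₂
        exact hainj hy₁.2 hy₂.2 (hy₁.1.trans hy₂.1.symm)
      exact Set.Finite.subset (hsing.finite.union (compl_finite_of_defect hdu')) hsub
    have hempty : ({α : Ω | (a ⁻¹' {α}).Infinite} : Set Ω) = ∅ := by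
      ext α
      simp only [Set.mem_setOf_eq, Set.mem_empty_iff_false, iff_false]
      exact fun h => h (hfib α)
    show #({α : Ω | (a ⁻¹' {α}).Infinite} : Set Ω) < ℵ₀
    rw [hempty, Cardinal.mk_emptyCollection]
    exact Cardinal.aleph0_pos
  have haS : a ∈ (S12345 : Set (Function.End Ω)) := by
    refine ⟨⟨⟨⟨?_, ?_⟩, ?_⟩, ?_⟩, ?_⟩
    · exact Or.inr (by rw [hda]; exact hdf)
    · exact Or.inl (by rw [hcola]; exact hdu)
    · exact Or.inl (by rw [hcola]; exact hdu')
    · exact Or.inr (by rw [hda]; exact hdf')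
    · exact hcta
  have hf : f = a * u * b := by
    funext x
    exact (hfab x).symm
  rw [hf]
  exact mul_mem (mul_mem (Subsemigroup.subset_closure (Or.inl haS))
    (Subsemigroup.subset_closure (Or.inr rfl))) (Subsemigroup.subset_closure (Or.inl hbS))
end

section
/- Let Ω be a countably infinite set and let u, v, f ∈ Ω^Ω. If u is surjective, c(u) > 0, c(v) = c(f) = ∞, k(f) < ∞, d(v) < ∞, and d(f) < ∞, then f belongs to the subsemigroup of Ω^Ω generated by S_{1,2,3,4,5} ∪ {u, v}. -/
/-!
Setting: `Ω` is a countably infinite set, `Function.End Ω = Ω → Ω` is the full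
transformation semigroup (a subset is closed under composition in one order iff
it is closed in the other, so the lattice of subsemigroups is unaffected by the
left-to-right convention of the paper).
-/

open Cardinal

section Helpers

variable {Ω : Type*}

lemma exists_isTransversal (g : Ω → Ω) : ∃ T : Set Ω, IsTransversal g T := by
  classical
  refine ⟨Set.range (fun β : Set.range g => Exists.choose β.2), ?_, ?_⟩
  · rintro x ⟨β, rfl⟩ y ⟨γ, rfl⟩ hxy
    have hβ : g (Exists.choose β.2) = β := β.2.choose_spec
    have hγ : g (Exists.choose γ.2) = γ := γ.2.choose_spec
    have hbg : β = γ := Subtype.ext (by rw [← hβ, ← hγ, hxy])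
    rw [hbg]
  · apply subset_antisymm
    · rintro _ ⟨_, ⟨β, rfl⟩, rfl⟩; exact ⟨_, rfl⟩
    · rintro α hα
      exact ⟨Exists.choose (show ∃ x, g x = α from hα), ⟨⟨α, hα⟩, rfl⟩,
        Exists.choose_spec (show ∃ x, g x = α from hα)⟩

instance (g : Ω → Ω) : Nonempty {T : Set Ω // IsTransversal g T} :=
  ⟨⟨_, (exists_isTransversal g).choose_spec⟩⟩

lemma collapse_le {g : Ω → Ω} {T : Set Ω} (hT : IsTransversal g T) :
    collapse g ≤ #(Tᶜ : Set Ω) :=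
  ciInf_le (OrderBot.bddBelow _) (⟨T, hT⟩ : {T : Set Ω // IsTransversal g T})

lemma le_collapse {g : Ω → Ω} {a : Cardinal}
    (h : ∀ T : Set Ω, IsTransversal g T → a ≤ #(Tᶜ : Set Ω)) : a ≤ collapse g :=
  le_ciInf fun T => h T.1 T.2

lemma isTransversal_comp_iff {i g : Ω → Ω} (hi : Function.Injective i) {T : Set Ω} :
    IsTransversal (i ∘ g) T ↔ IsTransversal g T := by
  constructor
  · rintro ⟨h1, h2⟩
    refine ⟨fun x hx y hy hxy => h1 hx hy (by simp only [Function.comp_apply, hxy]), ?_⟩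
    apply Set.image_injective.mpr hi
    rw [Set.image_comp, Set.range_comp] at h2
    exact h2
  · rintro ⟨h1, h2⟩
    refine ⟨fun x hx y hy hxy => h1 hx hy (hi hxy), ?_⟩
    rw [Set.image_comp, Set.range_comp, h2]

lemma le_collapse_comp {i g : Ω → Ω} (hi : Function.Injective i) {a : Cardinal}
    (h : a ≤ collapse g) : a ≤ collapse (i ∘ g) :=
  le_collapse fun T hT =>
    le_trans h (collapse_le ((isTransversal_comp_iff hi).mp hT))

lemma contract_comp_le {i g : Ω → Ω} (hi : Function.Injective i) :
    contract (i ∘ g) ≤ contract g := by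
  classical
  have key : ∀ α : {α : Ω | ((i ∘ g) ⁻¹' {α}).Infinite},
      ∃ β, (g ⁻¹' {β}).Infinite ∧ i β = α := by
    rintro ⟨α, hα⟩
    obtain ⟨x, hx⟩ := hα.nonempty
    simp only [Set.mem_preimage, Function.comp_apply, Set.mem_singleton_iff] at hx
    refine ⟨g x, ?_, hx⟩
    refine hα.mono ?_
    intro y hy
    simp only [Set.mem_preimage, Function.comp_apply, Set.mem_singleton_iff] at hy ⊢
    exact hi (by rw [hy, hx])
  refine Cardinal.mk_le_of_injective (f := fun α =>
    (⟨(key α).choose, (key α).choose_spec.1⟩ : {β : Ω | (g ⁻¹' {β}).Infinite})) ?_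
  intro a b hab
  have ha := (key a).choose_spec.2
  have hb := (key b).choose_spec.2
  apply Subtype.ext
  rw [← ha, ← hb]
  congr 1
  exact congrArg Subtype.val hab

lemma infinite_of_defect_lt [Infinite Ω] {S : Set Ω} (h : #(Sᶜ : Set Ω) < ℵ₀) :
    S.Infinite := by
  have hc : (Sᶜ : Set Ω).Finite := Set.finite_coe_iff.mp (Cardinal.lt_aleph0_iff_finite.mp h)
  intro hS
  exact Set.infinite_univ (α := Ω) (by
    rw [← Set.union_compl_self S]
    exact Set.Finite.union hS hc)

end Helpers

lemma bijective_mem_S12345 {Ω : Type*} {p : Function.End Ω} (hp : Function.Bijective p) :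
    p ∈ (S12345 : Set (Function.End Ω)) := by
  have hc : collapse p = 0 := by
    apply le_antisymm _ zero_le
    have hT : IsTransversal p Set.univ :=
      ⟨hp.injective.injOn, by exact Set.image_univ⟩
    simpa using collapse_le hT
  have hd : defect p = 0 := by
    unfold defect
    rw [hp.surjective.range_eq]
    simp
  have hk : contract p = 0 := by
    have he : {α : Ω | (p ⁻¹' {α}).Infinite} = ∅ := by
      ext α
      simp only [Set.mem_setOf_eq, Set.mem_empty_iff_false, iff_false, Set.not_infinite]
      apply Set.Subsingleton.finite
      intro x hx y hy
      change p x = α at hx; change p y = α at hy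
      exact hp.injective (hx.trans hy.symm)
    unfold contract
    rw [he]
    exact Cardinal.mk_emptyCollection Ω
  exact ⟨⟨⟨⟨Or.inl hc, Or.inr hd⟩, Or.inl (lt_of_le_of_lt hc.le aleph0_pos)⟩,
    Or.inr (lt_of_le_of_lt hd.le aleph0_pos)⟩,
    show contract p < ℵ₀ from lt_of_le_of_lt hk.le aleph0_pos⟩

theorem stmt10 (Ω : Type) [Countable Ω] [Infinite Ω] (u v f : Function.End Ω)
    (hu : Function.Surjective u) (hcu : 0 < collapse u)
    (hcv : ℵ₀ ≤ collapse v) (hcf : ℵ₀ ≤ collapse f) (hkf : contract f < ℵ₀)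
    (hdv : defect v < ℵ₀) (hdf : defect f < ℵ₀) :
    f ∈ Subsemigroup.closure (S12345 ∪ {u, v}) := by
  classical
  have humem : u ∈ Subsemigroup.closure (S12345 ∪ {u, v} : Set (Function.End Ω)) :=
    Subsemigroup.subset_closure (Or.inr (Set.mem_insert u {v}))
  have hvmem : v ∈ Subsemigroup.closure (S12345 ∪ {u, v} : Set (Function.End Ω)) :=
    Subsemigroup.subset_closure (Or.inr (Set.mem_insert_of_mem u rfl))
  -- choose a transversal of u, with finite complement when collapse u is finite
  obtain ⟨Tu, hTu, hTuc⟩ :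
      ∃ T : Set Ω, IsTransversal u T ∧ (collapse u < ℵ₀ → #(Tᶜ : Set Ω) < ℵ₀) := by
    by_cases hfin : collapse u < ℵ₀
    · by_contra hcon
      push_neg at hcon
      exact absurd (le_collapse (g := u) fun T hT => (hcon T hT).2)
        (not_le.mpr ((hcon (exists_isTransversal u).choose
          (exists_isTransversal u).choose_spec).1))
    · obtain ⟨T, hT⟩ := exists_isTransversal u
      exact ⟨T, hT, fun hh => absurd hh hfin⟩
  have hTuc_pos : 0 < #(Tuᶜ : Set Ω) := lt_of_lt_of_le hcu (collapse_le hTu)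
  -- a section τ of u with range Tu
  have hsec : ∀ β : Ω, ∃ t, t ∈ Tu ∧ u t = β := by
    intro β
    have hβ : β ∈ u '' Tu := by rw [hTu.2]; exact hu β
    obtain ⟨t, ht, hut⟩ := hβ
    exact ⟨t, ht, hut⟩
  set τ : Ω → Ω := fun β => (hsec β).choose with hτdef
  have hτT : ∀ β, τ β ∈ Tu := fun β => (hsec β).choose_spec.1
  have huτ : ∀ β, u (τ β) = β := fun β => (hsec β).choose_spec.2
  have hτinj : Function.Injective τ := by
    intro a b hab
    rw [← huτ a, ← huτ b, hab]
  have hτrange : Set.range τ = Tu := by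
    apply subset_antisymm
    · rintro _ ⟨β, rfl⟩; exact hτT β
    · intro t ht
      exact ⟨u t, hTu.1 (hτT (u t)) ht (huτ (u t))⟩
  set f₁ : Function.End Ω := fun x => τ (f x) with hf₁def
  have hf₁ : (f₁ : Ω → Ω) = τ ∘ f := rfl
  have hcol_f₁ : ℵ₀ ≤ collapse f₁ := by
    rw [show collapse f₁ = collapse (τ ∘ f) from rfl]
    exact le_collapse_comp hτinj hcf
  have hk_f₁ : contract f₁ < ℵ₀ := by
    rw [show contract f₁ = contract (τ ∘ f) from rfl]
    exact lt_of_le_of_lt (contract_comp_le hτinj) hkf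
  have hrange_f₁ : Set.range f₁ = τ '' Set.range f := by
    rw [hf₁]; exact Set.range_comp ..
  have hcompl1 : (Tuᶜ : Set Ω) ⊆ (Set.range f₁)ᶜ := by
    apply Set.compl_subset_compl.mpr
    rw [← hτrange, hrange_f₁]
    exact Set.image_subset_range τ _
  have huf₁ : u * f₁ = f := by
    rw [Function.End.mul_def]
    funext x
    exact huτ (f x)
  by_cases hfin : collapse u < ℵ₀
  · -- main case: collapse u finite
    have hTuc_fin : #(Tuᶜ : Set Ω) < ℵ₀ := hTuc hfin
    have hd₁pos : 0 < #((Set.range f₁)ᶜ : Set Ω) :=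
      lt_of_lt_of_le hTuc_pos (Cardinal.mk_le_mk_of_subset hcompl1)
    have hd₁fin : #((Set.range f₁)ᶜ : Set Ω) < ℵ₀ := by
      have hsub : ((Set.range f₁)ᶜ : Set Ω) ⊆ Tuᶜ ∪ τ '' ((Set.range f)ᶜ) := by
        intro x hx
        by_cases hxT : x ∈ Tu
        · rw [← hτrange] at hxT
          obtain ⟨β, rfl⟩ := hxT
          refine Or.inr ⟨β, ?_, rfl⟩
          intro hβ
          exact hx (by rw [hrange_f₁]; exact ⟨β, hβ, rfl⟩)
        · exact Or.inl hxT
      calc #((Set.range f₁)ᶜ : Set Ω)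
          ≤ #((Tuᶜ ∪ τ '' ((Set.range f)ᶜ) : Set Ω)) := Cardinal.mk_le_mk_of_subset hsub
        _ ≤ #(Tuᶜ : Set Ω) + #((τ '' ((Set.range f)ᶜ) : Set Ω)) := Cardinal.mk_union_le _ _
        _ < ℵ₀ := Cardinal.add_lt_aleph0 hTuc_fin
            (lt_of_le_of_lt (Cardinal.mk_image_le) hdf)
    have hrf_inf : (Set.range f).Infinite := infinite_of_defect_lt hdf
    have hrf₁_inf : (Set.range f₁).Infinite := by
      rw [hrange_f₁]
      exact Set.Infinite.image hτinj.injOn hrf_inf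
    -- transversal of v
    obtain ⟨Tv, hTv⟩ := exists_isTransversal v
    have hTvc_inf : ℵ₀ ≤ #(Tvᶜ : Set Ω) := le_trans hcv (collapse_le hTv)
    have hrv_inf : (Set.range v).Infinite := infinite_of_defect_lt hdv
    have hTv_inf : Tv.Infinite := by
      have h1 : #((v '' Tv : Set Ω)) = #(Tv : Set Ω) := Cardinal.mk_image_eq_of_injOn v Tv hTv.1
      have h2 : ℵ₀ ≤ #(Tv : Set Ω) := by
        rw [← h1, hTv.2]
        exact Cardinal.aleph0_le_mk_iff.mpr (Set.infinite_coe_iff.mpr hrv_inf)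
      exact Set.infinite_coe_iff.mp (Cardinal.aleph0_le_mk_iff.mp h2)
    obtain ⟨t₁, ht₁⟩ := hTv_inf.nonempty
    set T' : Set Ω := Tv \ {t₁} with hT'def
    have hT'Tv : T' ⊆ Tv := Set.diff_subset
    have hT'_inf : T'.Infinite := hTv_inf.diff (Set.finite_singleton t₁)
    have hT'c_inf : ℵ₀ ≤ #(T'ᶜ : Set Ω) :=
      le_trans hTvc_inf (Cardinal.mk_le_mk_of_subset (Set.compl_subset_compl.mpr hT'Tv))
    -- the injection j
    have hcard1 : #(Set.range f₁ : Set Ω) = #(T' : Set Ω) := by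
      apply le_antisymm
      · exact le_trans Cardinal.mk_le_aleph0
          (Cardinal.aleph0_le_mk_iff.mpr (Set.infinite_coe_iff.mpr hT'_inf))
      · exact le_trans Cardinal.mk_le_aleph0
          (Cardinal.aleph0_le_mk_iff.mpr (Set.infinite_coe_iff.mpr hrf₁_inf))
    obtain ⟨e1⟩ := Cardinal.eq.mp hcard1
    have hcard2 : #(((Set.range f₁)ᶜ : Set Ω)) ≤ #((T'ᶜ : Set Ω)) :=
      le_trans Cardinal.mk_le_aleph0 hT'c_inf
    obtain ⟨em⟩ := (Cardinal.le_def _ _).mp hcard2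
    set j : Ω → Ω := fun x =>
      if hx : x ∈ Set.range f₁ then (e1 ⟨x, hx⟩ : Ω) else (em ⟨x, hx⟩ : Ω) with hjdef
    have hj_in : ∀ x (hx : x ∈ Set.range f₁), j x = (e1 ⟨x, hx⟩ : Ω) := fun x hx => dif_pos hx
    have hj_out : ∀ x (hx : x ∉ Set.range f₁), j x = (em ⟨x, hx⟩ : Ω) := fun x hx => dif_neg hx
    have hj_mem : ∀ x ∈ Set.range f₁, j x ∈ T' := by
      intro x hx; rw [hj_in x hx]; exact (e1 ⟨x, hx⟩).2
    have hj_mem' : ∀ x, x ∉ Set.range f₁ → j x ∈ T'ᶜ := by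
      intro x hx; rw [hj_out x hx]; exact (em ⟨x, hx⟩).2
    have hjinj : Function.Injective j := by
      intro a b hab
      by_cases ha : a ∈ Set.range f₁ <;> by_cases hb : b ∈ Set.range f₁
      · rw [hj_in a ha, hj_in b hb] at hab
        exact congrArg Subtype.val (e1.injective (Subtype.ext hab))
      · exact absurd (hj_mem a ha) (by rw [hab]; exact hj_mem' b hb)
      · exact absurd (hj_mem b hb) (by rw [← hab]; exact hj_mem' a ha)
      · rw [hj_out a ha, hj_out b hb] at hab
        exact congrArg Subtype.val (em.injective (Subtype.ext hab))
    have hjrange : j '' Set.range f₁ = T' := by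
      apply subset_antisymm
      · rintro _ ⟨x, hx, rfl⟩; exact hj_mem x hx
      · intro t ht
        refine ⟨(e1.symm ⟨t, ht⟩ : Ω), (e1.symm ⟨t, ht⟩).2, ?_⟩
        rw [hj_in _ (e1.symm ⟨t, ht⟩).2]
        simp
    -- the map h
    set h : Function.End Ω := fun x => j (f₁ x) with hhdef
    have hrange_h : Set.range h = T' := by
      rw [show Set.range h = Set.range (j ∘ f₁) from rfl, Set.range_comp, hjrange]
    have hjτinj : Function.Injective (j ∘ τ) := hjinj.comp hτinj
    have hcol_h : ℵ₀ ≤ collapse h := by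
      rw [show collapse h = collapse ((j ∘ τ) ∘ f) from rfl]
      exact le_collapse_comp hjτinj hcf
    have hk_h : contract h < ℵ₀ := by
      rw [show contract h = contract ((j ∘ τ) ∘ f) from rfl]
      exact lt_of_le_of_lt (contract_comp_le hjτinj) hkf
    have hdef_h : ℵ₀ ≤ defect h := by
      show ℵ₀ ≤ #((Set.range h)ᶜ : Set Ω)
      rw [hrange_h]
      exact hT'c_inf
    have hhmem : h ∈ (S12345 : Set (Function.End Ω)) :=
      ⟨⟨⟨⟨Or.inr (lt_of_lt_of_le aleph0_pos hdef_h), Or.inl (lt_of_lt_of_le aleph0_pos hcol_h)⟩,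
        Or.inr hdef_h⟩, Or.inl hcol_h⟩, hk_h⟩
    -- the map s'
    obtain ⟨x₀⟩ : Nonempty Ω := inferInstance
    set β₀ : Ω := f₁ x₀ with hβ₀def
    have hβ₀ : β₀ ∈ Set.range f₁ := ⟨x₀, rfl⟩
    have hvjInj : ∀ β ∈ Set.range f₁, ∀ γ ∈ Set.range f₁, v (j β) = v (j γ) → β = γ := by
      intro β hβ γ hγ hvv
      exact hjinj (hTv.1 (hT'Tv (hj_mem β hβ)) (hT'Tv (hj_mem γ hγ)) hvv)
    set P : Ω → Prop := fun y => ∃ β, β ∈ Set.range f₁ ∧ v (j β) = y with hPdef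
    set s' : Function.End Ω := fun y => if hy : P y then hy.choose else β₀ with hs'def
    have hs'P : ∀ y (hy : P y), s' y = hy.choose := fun y hy => dif_pos hy
    have hs'nP : ∀ y, ¬ P y → s' y = β₀ := fun y hy => dif_neg hy
    have hkey : ∀ β ∈ Set.range f₁, s' (v (j β)) = β := by
      intro β hβ
      have hy : P (v (j β)) := ⟨β, hβ, rfl⟩
      rw [hs'P _ hy]
      exact hvjInj _ hy.choose_spec.1 _ hβ hy.choose_spec.2
    have hs'_range : Set.range s' = Set.range f₁ := by
      apply subset_antisymm
      · rintro _ ⟨y, rfl⟩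
        by_cases hy : P y
        · rw [hs'P y hy]; exact hy.choose_spec.1
        · rw [hs'nP y hy]; exact hβ₀
      · intro β hβ
        exact ⟨v (j β), hkey β hβ⟩
    set B : Set Ω := v '' T' with hBdef
    have hPB : ∀ y, P y ↔ y ∈ B := by
      intro y
      constructor
      · rintro ⟨β, hβ, rfl⟩
        exact ⟨j β, hj_mem β hβ, rfl⟩
      · rintro ⟨t, ht, rfl⟩
        rw [← hjrange] at ht
        obtain ⟨β, hβ, rfl⟩ := ht
        exact ⟨β, hβ, rfl⟩
    have hinv : ∀ y ∈ B, v (j (s' y)) = y := by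
      intro y hy
      have hPy : P y := (hPB y).mpr hy
      rw [hs'P y hPy]
      exact hPy.choose_spec.2
    have hs'B_inj : Set.InjOn s' B := by
      intro y hy z hz hyz
      rw [← hinv y hy, ← hinv z hz, hyz]
    have hTrans_s' : IsTransversal s' B := by
      refine ⟨hs'B_inj, ?_⟩
      apply subset_antisymm
      · exact Set.image_subset_range s' B
      · intro β hβ
        rw [hs'_range] at hβ
        exact ⟨v (j β), (hPB _).mp ⟨β, hβ, rfl⟩, hkey β hβ⟩
    have hBc : (Bᶜ : Set Ω) ⊆ (Set.range v)ᶜ ∪ {v t₁} := by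
      intro x hx
      by_cases hxv : x ∈ Set.range v
      · rw [← hTv.2] at hxv
        obtain ⟨t, ht, rfl⟩ := hxv
        by_cases htt : t = t₁
        · exact Or.inr (by rw [htt]; rfl)
        · exact absurd (⟨t, ⟨ht, htt⟩, rfl⟩ : v t ∈ B) hx
      · exact Or.inl hxv
    have hBc_fin : #(Bᶜ : Set Ω) < ℵ₀ := by
      calc #(Bᶜ : Set Ω) ≤ #((((Set.range v)ᶜ ∪ {v t₁} : Set Ω))) :=
            Cardinal.mk_le_mk_of_subset hBc
        _ ≤ #(((Set.range v)ᶜ : Set Ω)) + #(({v t₁} : Set Ω)) := Cardinal.mk_union_le _ _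
        _ < ℵ₀ := Cardinal.add_lt_aleph0 hdv
            (by rw [Cardinal.mk_singleton]; exact one_lt_aleph0)
    have hcol_s'_fin : collapse s' < ℵ₀ := lt_of_le_of_lt (collapse_le hTrans_s') hBc_fin
    have ht₁B : v t₁ ∉ B := by
      rintro ⟨t, ht, hvt⟩
      exact ht.2 (hTv.1 ht.1 ht₁ hvt)
    have hcol_s'_pos : 0 < collapse s' := by
      apply lt_of_lt_of_le zero_lt_one
      apply le_collapse
      intro T hT
      have hne : (Tᶜ : Set Ω).Nonempty := by
        by_contra hcon
        have hTc : (Tᶜ : Set Ω) = ∅ := Set.not_nonempty_iff_eq_empty.mp hcon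
        have hTuniv : T = Set.univ := Set.compl_empty_iff.mp hTc
        have h1 : s' (v t₁) = β₀ := hs'nP _ (fun hPy => ht₁B ((hPB _).mp hPy))
        have h2 : s' (v (j β₀)) = β₀ := hkey β₀ hβ₀
        have h3 : v t₁ = v (j β₀) :=
          hT.1 (by rw [hTuniv]; trivial) (by rw [hTuniv]; trivial) (h1.trans h2.symm)
        exact ht₁B (by rw [h3]; exact ⟨j β₀, hj_mem β₀ hβ₀, rfl⟩)
      exact Cardinal.one_le_iff_ne_zero.mpr
        (Cardinal.mk_ne_zero_iff.mpr (Set.nonempty_coe_sort.mpr hne))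
    have hk_s' : contract s' < ℵ₀ := by
      have hset : {α : Ω | (s' ⁻¹' {α}).Infinite} = ∅ := by
        ext α
        simp only [Set.mem_setOf_eq, Set.mem_empty_iff_false, iff_false, Set.not_infinite]
        have hsub : s' ⁻¹' {α} ⊆ (s' ⁻¹' {α} ∩ B) ∪ Bᶜ := by
          intro y hy
          by_cases hyB : y ∈ B
          · exact Or.inl ⟨hy, hyB⟩
          · exact Or.inr hyB
        refine Set.Finite.subset (Set.Finite.union ?_ ?_) hsub
        · apply Set.Subsingleton.finite
          intro y hy z hz
          have hy1 : s' y = α := hy.1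
          have hz1 : s' z = α := hz.1
          exact hs'B_inj hy.2 hz.2 (hy1.trans hz1.symm)
        · exact Set.finite_coe_iff.mp (Cardinal.lt_aleph0_iff_finite.mp hBc_fin)
      show contract s' < ℵ₀
      unfold contract
      rw [hset, Cardinal.mk_emptyCollection]
      exact aleph0_pos
    have hs'_defpos : 0 < defect s' := by
      show 0 < #((Set.range s')ᶜ : Set Ω)
      rw [hs'_range]
      exact hd₁pos
    have hs'_deffin : defect s' < ℵ₀ := by
      show #((Set.range s')ᶜ : Set Ω) < ℵ₀
      rw [hs'_range]
      exact hd₁fin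
    have hs'mem : s' ∈ (S12345 : Set (Function.End Ω)) :=
      ⟨⟨⟨⟨Or.inr hs'_defpos, Or.inl hcol_s'_pos⟩, Or.inl hcol_s'_fin⟩, Or.inr hs'_deffin⟩, hk_s'⟩
    have hfactor : u * (s' * (v * h)) = f := by
      funext x
      rw [Function.End.mul_def, Function.End.mul_def, Function.End.mul_def]
      show u (s' (v (h x))) = f x
      have hhx : h x = j (f₁ x) := rfl
      rw [hhx, hkey (f₁ x) ⟨x, rfl⟩]
      exact huτ (f x)
    rw [← hfactor]
    exact mul_mem humem (mul_mem (Subsemigroup.subset_closure (Or.inl hs'mem))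
      (mul_mem hvmem (Subsemigroup.subset_closure (Or.inl hhmem))))
  · -- easy case: collapse u infinite
    have hdefle : ℵ₀ ≤ defect f₁ := by
      show ℵ₀ ≤ #((Set.range f₁)ᶜ : Set Ω)
      calc ℵ₀ ≤ collapse u := not_lt.mp hfin
        _ ≤ #(Tuᶜ : Set Ω) := collapse_le hTu
        _ ≤ #((Set.range f₁)ᶜ : Set Ω) := Cardinal.mk_le_mk_of_subset hcompl1
    have hf₁mem : f₁ ∈ (S12345 : Set (Function.End Ω)) :=
      ⟨⟨⟨⟨Or.inr (lt_of_lt_of_le aleph0_pos hdefle), Or.inl (lt_of_lt_of_le aleph0_pos hcol_f₁)⟩,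
        Or.inr hdefle⟩, Or.inl hcol_f₁⟩, hk_f₁⟩
    rw [← huf₁]
    exact mul_mem humem (Subsemigroup.subset_closure (Or.inl hf₁mem))
end
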